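/- For all n ≥ 0: ∑_{k=0}^{n} (-1)^{n-k}·4^{n-k}·U(n,k)·(2k+1)·((2k-1)!!)² = T_{2n+1}, where U(n,k) are the generalized Stirling numbers for weights w(m)=((2m+1)/2)² and T_{2n+1} are the tangent numbers. -/

import Mathlib

/-- Generalized Stirling numbers of the second kind for the weights
w(m) = ((2m+1)/2)²: U(n,k) = U(n-1,k-1) + ((2k+1)/2)² U(n-1,k),
U(0,k)=[k=0], U(n,0) = (1/4)^n. -/
noncomputable def genStirlingU : ℕ → ℕ → ℚ
  | 0, 0 => 1
  | 0, _ + 1 => 0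
  | n + 1, 0 => (1 / 4) * genStirlingU n 0
  | n + 1, k + 1 => genStirlingU n k + ((2 * (k + 1) + 1) / 2 : ℚ) ^ 2 * genStirlingU n (k + 1)

/-- The odd double factorial (2k-1)!! = (2k)!/(2^k k!). -/
noncomputable def oddDoubleFactorial (k : ℕ) : ℚ :=
  ((2 * k).factorial : ℚ) / (2 ^ k * (k.factorial : ℚ))

open PowerSeries in
/-- The generating function (e^{2z}-1)/(e^{2z}+1) of the tangent numbers. -/
noncomputable def tangentSeries : PowerSeries ℚ :=
  (PowerSeries.rescale (2 : ℚ) (PowerSeries.exp ℚ) - 1) *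
    (PowerSeries.rescale (2 : ℚ) (PowerSeries.exp ℚ) + 1)⁻¹

/-- The tangent numbers T_{2n+1}, via
(e^{2z}-1)/(e^{2z}+1) = ∑_{k≥0} (-1)^k T_{2k+1} z^{2k+1}/(2k+1)!. -/
noncomputable def tangentNumber (n : ℕ) : ℚ :=
  (-1) ^ n * ((2 * n + 1).factorial : ℚ) * PowerSeries.coeff (R := ℚ) (2 * n + 1) tangentSeries


open PowerSeries

noncomputable def E : ℚ⟦X⟧ := rescale (2:ℚ) (exp ℚ)
local notation "D" => derivative ℚ
local notation "f" => tangentSeries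

lemma constE : constantCoeff (R := ℚ) E = 1 := by
  simp [E, ← coeff_zero_eq_constantCoeff]

lemma constE1 : constantCoeff (R := ℚ) (E + 1) = 2 := by
  simp [constE]; norm_num

lemma coeffE (n : ℕ) : coeff (R := ℚ) n E = 2^n / n.factorial := by
  simp [E, coeff_rescale, coeff_exp]; ring

lemma derivE : D E = C (R := ℚ) 2 * E := by
  ext n
  rw [coeff_derivative, coeff_C_mul, coeffE, coeffE, Nat.factorial_succ]
  have h : ((n+1:ℕ):ℚ) ≠ 0 := by positivity
  field_simp
  push_cast
  ring

lemma fE : f * (E + 1) = E - 1 := by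
  rw [tangentSeries, mul_assoc]
  rw [show ((rescale (2:ℚ)) (exp ℚ) + 1) = E + 1 from rfl,
    show ((rescale (2:ℚ)) (exp ℚ) - 1) = E - 1 from rfl,
    PowerSeries.inv_mul_cancel _ (by rw [constE1]; norm_num), mul_one]

lemma constf : constantCoeff (R := ℚ) f = 0 := by
  have := congrArg (constantCoeff (R := ℚ)) fE
  simp [constE1, constE] at this
  simpa using this

lemma coeff_one_mul' (a b : ℚ⟦X⟧) : coeff (R := ℚ) 1 (a * b) =
    constantCoeff (R := ℚ) a * coeff (R := ℚ) 1 b + coeff (R := ℚ) 1 a * constantCoeff (R := ℚ) b := by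
  rw [coeff_mul, show (Finset.HasAntidiagonal.antidiagonal 1 : Finset (ℕ×ℕ)) = {(0,1),(1,0)} from rfl,
    Finset.sum_insert (by decide), Finset.sum_singleton]
  simp [coeff_zero_eq_constantCoeff]

lemma coefff1 : coeff (R := ℚ) 1 f = 1 := by
  have := congrArg (coeff (R := ℚ) 1) fE
  rw [coeff_one_mul'] at this
  simp [constf, constE1, coeffE] at this
  norm_num at this
  linarith

lemma derivf : D f = 1 - f ^ 2 := by
  have hdom : (E + 1) ^ 2 ≠ 0 := by
    intro h
    have := congrArg (constantCoeff (R := ℚ)) h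
    rw [map_pow, constE1, map_zero] at this
    norm_num at this
  have h2 : (1 - f) * (E + 1) = 2 := by
    rw [sub_mul, one_mul, fE]; ring
  have h3 : (1 + f) * (E + 1) = 2 * E := by
    rw [add_mul, one_mul, fE]; ring
  have h1 : f * (C (R := ℚ) 2 * E) + (E + 1) * D f = C (R := ℚ) 2 * E := by
    have := congrArg (D ·) fE
    simp only [Derivation.leibniz, map_sub, map_add, Derivation.map_one_eq_zero,
      smul_eq_mul] at this
    rw [derivE] at this
    linear_combination this
  have key : (D f) * (E + 1) ^ 2 = (1 - f ^ 2) * (E + 1) ^ 2 := by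
    have hC2 : (C (R := ℚ) 2 : ℚ⟦X⟧) = 2 := by simp [map_ofNat]
    have e1 : (E+1) * D f = 2 * E * (1 - f) := by
      rw [hC2] at h1; linear_combination h1
    calc (D f) * (E + 1) ^ 2 = ((E + 1) * D f) * (E+1) := by ring
    _ = 2 * E * ((1-f) * (E+1)) := by rw [e1]; ring
    _ = (1 - f^2) * (E+1)^2 := by
        rw [h2]
        have : (1 - f^2) * (E+1)^2 = ((1-f)*(E+1)) * ((1+f)*(E+1)) := by ring
        rw [this, h2, h3]; ring
  exact mul_right_cancel₀ hdom key

lemma Dnat (n : ℕ) : D ((n : ℚ⟦X⟧)) = 0 := by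
  rw [← map_natCast (C (R := ℚ)) n, derivative_C]

lemma DCmul (q : ℚ) (x : ℚ⟦X⟧) : D (C (R := ℚ) q * x) = C (R := ℚ) q * D x := by
  rw [Derivation.leibniz, derivative_C, smul_zero, add_zero, smul_eq_mul]

lemma Du : D (1 - f^2) = -2 * (f * (1 - f^2)) := by
  rw [map_sub, Derivation.map_one_eq_zero, Derivation.leibniz_pow, derivf]
  simp only [smul_eq_mul, nsmul_eq_mul]
  push_cast
  ring

lemma Dupow (j : ℕ) : D ((1 - f^2)^j) = -(2*(j:ℚ⟦X⟧)) * (f * (1 - f^2)^j) := by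
  cases j with
  | zero => simp
  | succ j =>
    rw [Derivation.leibniz_pow, Du]
    simp only [smul_eq_mul, nsmul_eq_mul, Nat.add_sub_cancel]
    push_cast
    ring

lemma Dfu (i : ℕ) : D (f * (1 - f^2)^i) =
    (2*(i:ℚ⟦X⟧)+1) * (1 - f^2)^(i+1) - 2*(i:ℚ⟦X⟧) * (1 - f^2)^i := by
  rw [Derivation.leibniz, Dupow, derivf]
  simp only [smul_eq_mul]
  push_cast
  ring

lemma Dmulcast (n : ℕ) (x : ℚ⟦X⟧) : D ((n : ℚ⟦X⟧) * x) = (n : ℚ⟦X⟧) * D x := by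
  rw [Derivation.leibniz, Dnat, smul_zero, add_zero, smul_eq_mul]

lemma DDfu (i : ℕ) : D (D (f * (1 - f^2)^i)) =
    ((4*i^2 : ℕ) : ℚ⟦X⟧) * (f * (1 - f^2)^i)
      - ((2*(i+1)*(2*i+1) : ℕ) : ℚ⟦X⟧) * (f * (1 - f^2)^(i+1)) := by
  have h1 : D ((2*(i:ℚ⟦X⟧)+1) * (1 - f^2)^(i+1)) = (2*(i:ℚ⟦X⟧)+1) * D ((1 - f^2)^(i+1)) := by
    have : (2*(i:ℚ⟦X⟧)+1) = ((2*i+1 : ℕ) : ℚ⟦X⟧) := by push_cast; ring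
    rw [this, Dmulcast]
  have h2 : D (2*(i:ℚ⟦X⟧) * (1 - f^2)^i) = 2*(i:ℚ⟦X⟧) * D ((1 - f^2)^i) := by
    have : (2*(i:ℚ⟦X⟧)) = ((2*i : ℕ) : ℚ⟦X⟧) := by push_cast; ring
    rw [this, Dmulcast]
  rw [Dfu, map_sub, h1, h2, Dupow, Dupow]
  push_cast
  ring

lemma DDfuC (q : ℚ) (i : ℕ) : D (D (C (R := ℚ) q * (f * (1 - f^2)^i))) =
    C (R := ℚ) ((4*i^2 : ℕ) * q) * (f * (1 - f^2)^i)
      - C (R := ℚ) ((2*(i+1)*(2*i+1) : ℕ) * q) * (f * (1 - f^2)^(i+1)) := by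
  rw [DCmul, DCmul, DDfu, map_mul, map_mul, map_natCast, map_natCast]
  ring

noncomputable def dd (k i : ℕ) : ℚ :=
  if i ≤ k then ((2*k).factorial : ℚ) * ((k-i).centralBinom : ℚ) / 4^(k-i) else 0

lemma fact2succ (k : ℕ) : ((2*(k+1)).factorial : ℚ) = (2*k+2)*(2*k+1)*((2*k).factorial) := by
  have : 2*(k+1) = (2*k+1)+1 := by ring
  rw [this, Nat.factorial_succ, Nat.factorial_succ]
  push_cast; ring

lemma centralBinom_cast (k : ℕ) :
    ((k:ℚ)+1) * ((k+1).centralBinom : ℚ) = 2*(2*k+1) * (k.centralBinom : ℚ) := by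
  exact_mod_cast congrArg (Nat.cast : ℕ → ℚ) (Nat.succ_mul_centralBinom_succ k)

lemma dd_zero (k : ℕ) : dd (k+1) 0 = (2*(k:ℚ)+1)^2 * dd k 0 := by
  simp only [dd, if_pos (Nat.zero_le _), Nat.sub_zero]
  rw [fact2succ]
  have h4 : (4:ℚ)^(k+1) = 4 * 4^k := by ring
  have hk : ((k:ℚ)+1) ≠ 0 := by positivity
  have h40 : (4:ℚ)^k ≠ 0 := by positivity
  rw [h4]
  field_simp
  linear_combination 2 * centralBinom_cast k

lemma dd_succ {k i : ℕ} (h : i ≤ k) :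
    dd (k+1) (i+1) = (2*(i:ℚ)+2)*(2*(i:ℚ)+1) * dd k i
      + ((2*(k:ℚ)+1)^2 - (2*(i:ℚ)+2)^2) * dd k (i+1) := by
  rcases eq_or_lt_of_le h with rfl | hlt
  · have h1 : ¬ (i+1 ≤ i) := by omega
    simp only [dd, if_pos (le_refl _), if_pos (Nat.le_succ _), if_neg h1,
      Nat.sub_self, Nat.add_sub_cancel]
    rw [fact2succ]
    simp [Nat.centralBinom_zero]
  · obtain ⟨j, rfl⟩ : ∃ j, k = i + j + 1 := ⟨k - i - 1, by omega⟩
    have e1 : i + 1 ≤ i + j + 1 + 1 := by omega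
    have e2 : i ≤ i + j + 1 := by omega
    have e3 : i + 1 ≤ i + j + 1 := by omega
    have s1 : i + j + 1 + 1 - (i+1) = j + 1 := by omega
    have s2 : i + j + 1 - i = j + 1 := by omega
    have s3 : i + j + 1 - (i+1) = j := by omega
    simp only [dd, if_pos e1, if_pos e2, if_pos e3, s1, s2, s3]
    have hf : ((2*(i+j+1+1)).factorial : ℚ)
        = (2*((i:ℚ)+j+1)+2)*(2*((i:ℚ)+j+1)+1)*((2*(i+j+1)).factorial) := by
      have := fact2succ (i+j+1); push_cast at this ⊢; linarith [this]
    rw [hf]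
    have h4 : (4:ℚ)^(j+1) = 4 * 4^j := by ring
    have h40 : (4:ℚ)^j ≠ 0 := by positivity
    rw [h4]
    field_simp
    push_cast
    linear_combination (8*(i:ℚ)+4*(j:ℚ)+10) * centralBinom_cast j

lemma dd_of_gt {k i : ℕ} (h : k < i) : dd k i = 0 := if_neg (by omega)

lemma sum_cb (k : ℕ) : ∑ j ∈ Finset.range (k+1), ((j.centralBinom : ℚ)/4^j)
    = (2*(k:ℚ)+1) * (k.centralBinom : ℚ) / 4^k := by
  induction k with
  | zero => simp [Nat.centralBinom_zero]
  | succ k ih =>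
    rw [Finset.sum_range_succ, ih]
    have h40 : (4:ℚ)^k ≠ 0 := by positivity
    have hk : ((k:ℚ)+1) ≠ 0 := by positivity
    have hc := centralBinom_cast k
    push_cast
    field_simp
    linear_combination (-2:ℚ) * 4^k * hc

lemma sum_dd (k : ℕ) : ∑ i ∈ Finset.range (k+1), dd k i
    = (2*(k:ℚ)+1) * ((2*k).factorial : ℚ) * (k.centralBinom : ℚ) / 4^k := by
  have h1 : ∀ i ∈ Finset.range (k+1), dd k i
      = ((2*k).factorial : ℚ) * (((k-i).centralBinom : ℚ)/4^(k-i)) := by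
    intro i hi
    rw [Finset.mem_range] at hi
    rw [dd, if_pos (by omega)]
    ring
  rw [Finset.sum_congr rfl h1, ← Finset.mul_sum]
  have h2 : ∑ i ∈ Finset.range (k+1), (((k-i).centralBinom : ℚ)/4^(k-i))
      = ∑ j ∈ Finset.range (k+1), ((j.centralBinom : ℚ)/4^j) := by
    rw [← Finset.sum_range_reflect]
    apply Finset.sum_congr rfl
    intro i hi
    rw [Finset.mem_range] at hi
    have hki : k - (k + 1 - 1 - i) = i := by omega
    rw [hki]
  rw [h2, sum_cb]
  ring

noncomputable def GG (k : ℕ) : ℚ⟦X⟧ :=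
  ∑ i ∈ Finset.range (k+1), C (R := ℚ) (dd k i) * (f * (1 - f^2)^i)

lemma hKEY (k : ℕ) : GG (k+1) =
    (∑ i ∈ Finset.range (k+1),
        C (R := ℚ) (((2*(k:ℚ)+1)^2 - ((4*i^2:ℕ) : ℚ)) * dd k i) * (f * (1 - f^2)^i))
    + ∑ i ∈ Finset.range (k+1),
        C (R := ℚ) (((2*(i+1)*(2*i+1):ℕ) : ℚ) * dd k i) * (f * (1 - f^2)^(i+1)) := by
  have hterm : ∀ i ∈ Finset.range (k+1),
      C (R := ℚ) (dd (k+1) (i+1)) * (f * (1 - f^2)^(i+1))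
        = C (R := ℚ) (((2*(k:ℚ)+1)^2 - ((4*(i+1)^2:ℕ) : ℚ)) * dd k (i+1)) * (f * (1 - f^2)^(i+1))
          + C (R := ℚ) (((2*(i+1)*(2*i+1):ℕ) : ℚ) * dd k i) * (f * (1 - f^2)^(i+1)) := by
    intro i hi
    rw [Finset.mem_range] at hi
    rw [← add_mul, ← map_add]
    have := dd_succ (show i ≤ k by omega)
    rw [this]
    congr 1
    push_cast
    ring
  have hpeel1 : GG (k+1)
      = ∑ i ∈ Finset.range (k+1), C (R := ℚ) (dd (k+1) (i+1)) * (f * (1 - f^2)^(i+1))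
        + C (R := ℚ) (dd (k+1) 0) * (f * (1 - f^2)^0) :=
    Finset.sum_range_succ' (fun i => C (R := ℚ) (dd (k+1) i) * (f * (1 - f^2)^i)) (k+1)
  have hpeel2 : ∑ i ∈ Finset.range (k+1),
        C (R := ℚ) (((2*(k:ℚ)+1)^2 - ((4*i^2:ℕ) : ℚ)) * dd k i) * (f * (1 - f^2)^i)
      = ∑ i ∈ Finset.range k,
          C (R := ℚ) (((2*(k:ℚ)+1)^2 - ((4*(i+1)^2:ℕ) : ℚ)) * dd k (i+1)) * (f * (1 - f^2)^(i+1))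
        + C (R := ℚ) (((2*(k:ℚ)+1)^2 - ((4*0^2:ℕ) : ℚ)) * dd k 0) * (f * (1 - f^2)^0) :=
    Finset.sum_range_succ' (fun i =>
      C (R := ℚ) (((2*(k:ℚ)+1)^2 - ((4*i^2:ℕ) : ℚ)) * dd k i) * (f * (1 - f^2)^i)) k
  have hext : ∑ i ∈ Finset.range (k+1),
        C (R := ℚ) (((2*(k:ℚ)+1)^2 - ((4*(i+1)^2:ℕ) : ℚ)) * dd k (i+1)) * (f * (1 - f^2)^(i+1))
      = ∑ i ∈ Finset.range k,
          C (R := ℚ) (((2*(k:ℚ)+1)^2 - ((4*(i+1)^2:ℕ) : ℚ)) * dd k (i+1)) * (f * (1 - f^2)^(i+1)) := by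
    rw [Finset.sum_range_succ, dd_of_gt (Nat.lt_succ_self k)]
    simp
  have hc0 : C (R := ℚ) (dd (k+1) 0)
      = C (R := ℚ) (((2*(k:ℚ)+1)^2 - ((4*0^2:ℕ) : ℚ)) * dd k 0) := by
    rw [dd_zero]
    congr 1
    push_cast
    ring
  rw [hpeel1, Finset.sum_congr rfl hterm, Finset.sum_add_distrib, hext, hpeel2, hc0]
  ring

lemma M1 (k : ℕ) : D (D (GG k)) = C (R := ℚ) ((2*(k:ℚ)+1)^2) * GG k - GG (k+1) := by
  have hA : D (D (GG k)) =
      (∑ i ∈ Finset.range (k+1), C (R := ℚ) (((4*i^2:ℕ) : ℚ) * dd k i) * (f * (1 - f^2)^i))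
      - (∑ i ∈ Finset.range (k+1),
          C (R := ℚ) (((2*(i+1)*(2*i+1):ℕ) : ℚ) * dd k i) * (f * (1 - f^2)^(i+1))) := by
    rw [GG, map_sum, map_sum, ← Finset.sum_sub_distrib]
    exact Finset.sum_congr rfl fun i _ => DDfuC (dd k i) i
  have hB : C (R := ℚ) ((2*(k:ℚ)+1)^2) * GG k =
      ∑ i ∈ Finset.range (k+1), C (R := ℚ) ((2*(k:ℚ)+1)^2 * dd k i) * (f * (1 - f^2)^i) := by
    rw [GG, Finset.mul_sum]
    exact Finset.sum_congr rfl fun i _ => by rw [map_mul, mul_assoc]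
  have hsplit : ∀ i ∈ Finset.range (k+1),
      C (R := ℚ) (((2*(k:ℚ)+1)^2 - ((4*i^2:ℕ) : ℚ)) * dd k i) * (f * (1 - f^2)^i)
        = C (R := ℚ) ((2*(k:ℚ)+1)^2 * dd k i) * (f * (1 - f^2)^i)
          - C (R := ℚ) (((4*i^2:ℕ) : ℚ) * dd k i) * (f * (1 - f^2)^i) := by
    intro i _
    rw [← sub_mul, ← map_sub, ← sub_mul]
  rw [hA, hB, hKEY, Finset.sum_congr rfl hsplit, Finset.sum_sub_distrib]
  ring

lemma genU_succ_succ (n k : ℕ) : genStirlingU (n+1) (k+1)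
    = genStirlingU n k + ((2 * ((k:ℚ) + 1) + 1) / 2) ^ 2 * genStirlingU n (k + 1) := by
  rw [genStirlingU]

lemma U_gt : ∀ n k, n < k → genStirlingU n k = 0 := by
  intro n
  induction n with
  | zero =>
    intro k hk
    obtain ⟨k, rfl⟩ : ∃ m, k = m + 1 := ⟨k - 1, by omega⟩
    rfl
  | succ n ih =>
    intro k hk
    obtain ⟨k, rfl⟩ : ∃ m, k = m + 1 := ⟨k - 1, by omega⟩
    rw [genU_succ_succ, ih k (by omega), ih (k+1) (by omega)]
    ring

lemma U_n0 (n : ℕ) : genStirlingU n 0 = (1/4)^n := by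
  induction n with
  | zero => simp [genStirlingU]
  | succ n ih => rw [genStirlingU, ih]; ring

noncomputable def BB (n k : ℕ) : ℚ := (-1)^k * 4^(n-k) * genStirlingU n k

lemma BB_zero (n : ℕ) : BB n 0 = 1 := by
  rw [BB, U_n0]
  simp [← mul_pow]

lemma BB_gt {n k : ℕ} (h : n < k) : BB n k = 0 := by
  rw [BB, U_gt n k h, mul_zero]

lemma BB_rec {n k : ℕ} (hk : k ≤ n) :
    BB (n+1) (k+1) = (2*((k:ℚ)+1)+1)^2 * BB n (k+1) - BB n k := by
  rcases eq_or_lt_of_le hk with rfl | hlt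
  · rw [BB, BB, BB, genU_succ_succ, U_gt k (k+1) (by omega)]
    simp only [Nat.sub_self, Nat.add_sub_cancel, pow_zero]
    push_cast
    ring
  · have h1 : n + 1 - (k+1) = (n - (k+1)) + 1 := by omega
    have h2 : n - k = (n - (k+1)) + 1 := by omega
    rw [BB, BB, BB, genU_succ_succ, h1, h2]
    push_cast
    ring

lemma M3 : ∀ n : ℕ, (fun p => D (D p))^[n] f
    = ∑ k ∈ Finset.range (n+1), C (R := ℚ) (BB n k) * GG k := by
  intro n
  induction n with
  | zero =>
    have hdd : dd 0 0 = 1 := by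
      rw [dd, if_pos (le_refl 0)]
      simp [Nat.centralBinom_zero]
    simp [GG, BB_zero, hdd]
  | succ n ih =>
    rw [Function.iterate_succ_apply', ih, map_sum, map_sum]
    have hterm : ∀ k ∈ Finset.range (n+1),
        D (D (C (R := ℚ) (BB n k) * GG k))
          = C (R := ℚ) ((2*(k:ℚ)+1)^2 * BB n k) * GG k - C (R := ℚ) (BB n k) * GG (k+1) := by
      intro k _
      rw [DCmul, DCmul, M1, mul_sub, ← mul_assoc, ← map_mul, mul_comm (BB n k)]
    rw [Finset.sum_congr rfl hterm, Finset.sum_sub_distrib]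
    have hpeel1 := Finset.sum_range_succ' (fun k => C (R := ℚ) (BB (n+1) k) * GG k) (n+1)
    have hpeel2 := Finset.sum_range_succ'
      (fun k => C (R := ℚ) ((2*(k:ℚ)+1)^2 * BB n k) * GG k) n
    have htermw : ∀ k ∈ Finset.range (n+1),
        C (R := ℚ) (BB (n+1) (k+1)) * GG (k+1)
          = C (R := ℚ) ((2*((k:ℚ)+1)+1)^2 * BB n (k+1)) * GG (k+1)
            - C (R := ℚ) (BB n k) * GG (k+1) := by
      intro k hk
      rw [Finset.mem_range] at hk
      rw [BB_rec (by omega : k ≤ n), map_sub, sub_mul, map_mul]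
    have hext : ∑ k ∈ Finset.range (n+1),
          C (R := ℚ) ((2*((k:ℚ)+1)+1)^2 * BB n (k+1)) * GG (k+1)
        = ∑ k ∈ Finset.range n,
            C (R := ℚ) ((2*((k:ℚ)+1)+1)^2 * BB n (k+1)) * GG (k+1) := by
      rw [Finset.sum_range_succ, BB_gt (Nat.lt_succ_self n)]
      simp
    have hcast : ∀ k : ℕ, (2*(((k+1):ℕ):ℚ)+1)^2 = (2*((k:ℚ)+1)+1)^2 := by
      intro k; push_cast; ring
    rw [hpeel1]
    rw [Finset.sum_congr rfl htermw, Finset.sum_sub_distrib, hext, hpeel2]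
    have hc0 : C (R := ℚ) (BB (n+1) 0) * GG 0
        = C (R := ℚ) ((2*((0:ℕ):ℚ)+1)^2 * BB n 0) * GG 0 := by
      rw [BB_zero, BB_zero]
      norm_num
    rw [hc0]
    have hsumcast : ∑ k ∈ Finset.range n,
          C (R := ℚ) ((2*((k:ℚ)+1)+1)^2 * BB n (k+1)) * GG (k+1)
        = ∑ k ∈ Finset.range n,
            C (R := ℚ) ((2*(((k+1):ℕ):ℚ)+1)^2 * BB n (k+1)) * GG (k+1) := by
      apply Finset.sum_congr rfl
      intro k _
      rw [hcast]
    rw [hsumcast]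
    ring

lemma C1 (n : ℕ) (g : ℚ⟦X⟧) : coeff (R := ℚ) 1 ((fun p => D (D p))^[n] g)
    = (((2*n+1).factorial : ℚ)) * coeff (R := ℚ) (2*n+1) g := by
  induction n generalizing g with
  | zero => simp
  | succ n ih =>
    rw [Function.iterate_succ_apply, ih (D (D g))]
    rw [coeff_derivative, coeff_derivative]
    have h1 : 2*n+1+1+1 = 2*(n+1)+1 := by omega
    rw [h1]
    have h2 : ((2*(n+1)+1).factorial : ℚ)
        = ((2*n+1+1+1) : ℚ) * ((2*n+1+1) : ℚ) * ((2*n+1).factorial : ℚ) := by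
      have e : 2*(n+1)+1 = (2*n+1)+1+1 := by omega
      rw [e, Nat.factorial_succ, Nat.factorial_succ]
      push_cast
      ring
    rw [h2]
    push_cast
    ring

lemma C2 (k : ℕ) : coeff (R := ℚ) 1 (GG k)
    = (2*(k:ℚ)+1) * ((2*k).factorial : ℚ) * (k.centralBinom : ℚ) / 4^k := by
  rw [GG, map_sum]
  have hterm : ∀ i ∈ Finset.range (k+1),
      coeff (R := ℚ) 1 (C (R := ℚ) (dd k i) * (f * (1 - f^2)^i)) = dd k i := by
    intro i _
    rw [coeff_C_mul, coeff_one_mul', constf, coefff1]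
    have hcc : constantCoeff (R := ℚ) ((1 - f^2)^i) = 1 := by
      rw [map_pow, map_sub, map_one, map_pow, constf]
      norm_num
    rw [hcc]
    ring
  rw [Finset.sum_congr rfl hterm, sum_dd]

theorem sum_genStirlingU_tangent (n : ℕ) :
    ∑ k ∈ Finset.range (n + 1),
        (-1 : ℚ) ^ (n - k) * 4 ^ (n - k) * genStirlingU n k * (2 * k + 1) *
          (oddDoubleFactorial k) ^ 2 =
      tangentNumber n := by
  have hmain := congrArg (coeff (R := ℚ) 1) (M3 n)
  rw [C1, map_sum] at hmain
  have hterm' : ∀ k ∈ Finset.range (n+1),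
      coeff (R := ℚ) 1 (C (R := ℚ) (BB n k) * GG k)
        = BB n k * ((2*(k:ℚ)+1) * ((2*k).factorial : ℚ) * (k.centralBinom : ℚ) / 4^k) := by
    intro k _
    rw [coeff_C_mul, C2]
  rw [Finset.sum_congr rfl hterm'] at hmain
  rw [tangentNumber]
  have hrw : (-1:ℚ)^n * ((2*n+1).factorial : ℚ) * coeff (R := ℚ) (2*n+1) f
      = (-1:ℚ)^n * (((2*n+1).factorial : ℚ) * coeff (R := ℚ) (2*n+1) f) := by ring
  rw [hrw, hmain, Finset.mul_sum]
  apply Finset.sum_congr rfl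
  intro k hk
  rw [Finset.mem_range] at hk
  have hk' : k ≤ n := by omega
  have hsign : (-1:ℚ)^(n-k) = (-1:ℚ)^n * (-1:ℚ)^k := by
    have h1 : (-1:ℚ)^n = (-1:ℚ)^(n-k) * (-1:ℚ)^k := by
      rw [← pow_add, Nat.sub_add_cancel hk']
    rw [h1, mul_assoc, ← pow_add]
    have h2 : (-1:ℚ)^(k+k) = 1 := by
      rw [← two_mul, pow_mul]
      norm_num
    rw [h2, mul_one]
  have hodf : (oddDoubleFactorial k)^2
      = ((2*k).factorial : ℚ) * (k.centralBinom : ℚ) / 4^k := by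
    rw [oddDoubleFactorial, Nat.centralBinom]
    have hch : (((2*k).choose k : ℕ) : ℚ) * (k.factorial : ℚ) * (k.factorial : ℚ)
        = ((2*k).factorial : ℚ) := by
      have := Nat.choose_mul_factorial_mul_factorial (show k ≤ 2*k by omega)
      have h2 : 2*k - k = k := by omega
      rw [h2] at this
      exact_mod_cast congrArg (Nat.cast : ℕ → ℚ) this
    have hkf : (k.factorial : ℚ) ≠ 0 := by
      exact_mod_cast Nat.cast_ne_zero.mpr k.factorial_ne_zero
    have h2k : ((2:ℚ)^k) ≠ 0 := by positivity
    have h4k : ((4:ℚ)^k) ≠ 0 := by positivity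
    field_simp
    rw [show ((4:ℚ))^k = (2^k)*(2^k) by rw [← mul_pow]; norm_num]
    linear_combination (-(2^k*2^k : ℚ)) * hch
  rw [hodf, hsign, BB]
  push_cast
  ring
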